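/- For every k ≥ 3, a graph G is k-chromatic and double-edge-critical if and only if G is the complete graph K_k. -/

import Mathlib

open SimpleGraph

/-- A graph is vertex-critical if deleting any vertex decreases the chromatic number. -/
def VertexCritical {V : Type} (G : SimpleGraph V) : Prop :=
  ∀ v : V, (G.induce ({v}ᶜ : Set V)).chromaticNumber < G.chromaticNumber

/-- A vertex-critical graph is double-edge-critical if deleting any two non-incident edges
(edges sharing no endpoint) decreases the chromatic number by at least two. -/
def DoubleEdgeCritical {V : Type} (G : SimpleGraph V) : Prop :=
  VertexCritical G ∧
  ∀ a b c d : V, G.Adj a b → G.Adj c d → a ≠ c → a ≠ d → b ≠ c → b ≠ d →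
    (G.deleteEdges {s(a, b), s(c, d)}).chromaticNumber + 2 ≤ G.chromaticNumber

private lemma induce_top_eq {V : Type} (s : Set V) : ((⊤ : SimpleGraph V).induce s) = ⊤ := by
  ext a b
  simp [Subtype.coe_injective.ne_iff]

private lemma enat_le_of_lt_cast {a : ℕ∞} {k m : ℕ} (h : a < (k : ℕ∞)) (hm : m + 1 = k) :
    a ≤ (m : ℕ∞) := by
  have h3 : ((m : ℕ) : ℕ∞) + ((1:ℕ):ℕ∞) = ((m + 1 : ℕ) : ℕ∞) := (Nat.cast_add _ _).symm
  rw [Nat.cast_one] at h3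
  rw [hm] at h3
  rw [← h3] at h
  exact (ENat.lt_add_one_iff (by simp)).mp h

private lemma enat_cast_add_two {m k : ℕ} (hm : m + 2 = k) :
    ((m : ℕ) : ℕ∞) + 2 = (k : ℕ∞) := by
  have h3 : ((m : ℕ) : ℕ∞) + ((2:ℕ):ℕ∞) = ((m + 2 : ℕ) : ℕ∞) := (Nat.cast_add _ _).symm
  rw [Nat.cast_ofNat] at h3
  rw [h3, hm]

/-- For every `k ≥ 3`, a graph is `k`-chromatic and double-edge-critical if and only if it
is the complete graph `K_k`. -/
theorem stmt19 {V : Type} [Fintype V] (G : SimpleGraph V) (k : ℕ) (hk : 3 ≤ k) :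
    (G.chromaticNumber = k ∧ DoubleEdgeCritical G) ↔
    (G = ⊤ ∧ Fintype.card V = k) := by
  classical
  constructor
  · rintro ⟨hchi, hvc, hdec⟩
    -- G admits no (k-1)-coloring
    have hncol : ¬ G.Colorable (k-1) := by
      intro h
      have h1 := h.chromaticNumber_le
      rw [hchi, Nat.cast_le] at h1
      omega
    -- every vertex has two distinct neighbors
    have htwo : ∀ v : V, ∃ w₁ w₂, G.Adj v w₁ ∧ G.Adj v w₂ ∧ w₁ ≠ w₂ := by
      intro v
      by_contra hcon
      push_neg at hcon
      have h1 := hvc v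
      rw [hchi] at h1
      have h2 : (G.induce ({v}ᶜ : Set V)).chromaticNumber ≤ ((k-1 : ℕ) : ℕ∞) :=
        enat_le_of_lt_cast h1 (by omega)
      rw [chromaticNumber_le_iff_colorable] at h2
      obtain ⟨C⟩ := h2
      haveI : Nontrivial (Fin (k-1)) := Fin.nontrivial_iff_two_le.mpr (by omega)
      have hc0 : ∃ c₀ : Fin (k-1), ∀ w : ({v}ᶜ : Set V), G.Adj v w → C w ≠ c₀ := by
        by_cases hex : ∃ w : ({v}ᶜ : Set V), G.Adj v w
        · obtain ⟨w, hw⟩ := hex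
          obtain ⟨c₀, hc₀⟩ := exists_ne (C w)
          refine ⟨c₀, fun w' hw' => ?_⟩
          have hval : (w' : V) = (w : V) := hcon _ _ hw' hw
          rw [Subtype.ext hval]
          exact hc₀.symm
        · push_neg at hex
          exact ⟨Classical.arbitrary _, fun w hw => absurd hw (hex w)⟩
      obtain ⟨c₀, hc₀⟩ := hc0
      apply hncol
      refine ⟨Coloring.mk (fun u => if h : u = v then c₀ else C ⟨u, h⟩) ?_⟩
      intro u u' hadj
      split_ifs with h h' h'
      · exfalso; rw [h, h'] at hadj; exact G.irrefl hadj
      · subst h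
        exact fun he => hc₀ ⟨u', h'⟩ hadj he.symm
      · subst h'
        exact fun he => hc₀ ⟨u, h⟩ hadj.symm he
      · exact C.valid hadj
    -- any two distinct vertices are adjacent
    have hcomplete : ∀ x y : V, x ≠ y → G.Adj x y := by
      intro x y hxy
      by_contra hnadj
      obtain ⟨a, a', hxa, hxa', haa'⟩ := htwo x
      obtain ⟨w₁, w₂, hyw₁, hyw₂, hww⟩ := htwo y
      have hcex : ∃ c, G.Adj y c ∧ c ≠ a := by
        by_cases h : w₁ = a
        · exact ⟨w₂, hyw₂, fun he => hww (by rw [h, he])⟩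
        · exact ⟨w₁, hyw₁, h⟩
      obtain ⟨c, hyc, hca⟩ := hcex
      have hay : a ≠ y := fun h => hnadj (h ▸ hxa)
      have hcx : c ≠ x := fun h => hnadj ((h ▸ hyc).symm)
      have hd := hdec x a y c hxa hyc hxy (Ne.symm hcx) hay (Ne.symm hca)
      rw [hchi] at hd
      have hle : (G.deleteEdges {s(x,a), s(y,c)}).chromaticNumber ≤ ((k-2:ℕ):ℕ∞) := by
        rw [← enat_cast_add_two (show k - 2 + 2 = k by omega)] at hd
        exact (WithTop.add_le_add_iff_right (by simp : (2:ℕ∞) ≠ ⊤)).mp hd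
      rw [chromaticNumber_le_iff_colorable] at hle
      obtain ⟨D⟩ := hle
      apply hncol
      have hcol : G.Colorable (Fintype.card (Option (Fin (k-2)))) := by
        refine Coloring.colorable
          (Coloring.mk (fun u => if u = x ∨ u = y then (none : Option (Fin (k-2)))
            else some (D u)) ?_)
        intro u u' hadj
        split_ifs with h h' h'
        · exfalso
          rcases h with rfl | rfl <;> rcases h' with rfl | rfl
          · exact G.irrefl hadj
          · exact hnadj hadj
          · exact hnadj hadj.symm
          · exact G.irrefl hadj
        · simp
        · simp
        · push_neg at h h'
          simp only [Ne, Option.some_inj]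
          intro he
          refine D.valid ?_ he
          rw [deleteEdges_adj]
          refine ⟨hadj, ?_⟩
          intro hmem
          simp only [Set.mem_insert_iff, Set.mem_singleton_iff, Sym2.eq_iff] at hmem
          rcases hmem with (⟨h1, _⟩ | ⟨_, h2⟩) | (⟨h1, _⟩ | ⟨_, h2⟩)
          · exact h.1 h1
          · exact h'.1 h2
          · exact h.2 h1
          · exact h'.2 h2
      refine hcol.mono ?_
      simp only [Fintype.card_option, Fintype.card_fin]
      omega
    have hGtop : G = ⊤ := by
      ext u w
      simp only [top_adj]
      exact ⟨G.ne_of_adj, hcomplete u w⟩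
    refine ⟨hGtop, ?_⟩
    rw [hGtop, chromaticNumber_top] at hchi
    exact_mod_cast hchi
  · rintro ⟨rfl, hcard⟩
    refine ⟨by rw [chromaticNumber_top, hcard], ?_, ?_⟩
    · -- vertex-critical
      intro v
      haveI : Fintype ({v}ᶜ : Set V) := Fintype.ofFinite _
      rw [induce_top_eq, chromaticNumber_top, chromaticNumber_top, Nat.cast_lt]
      have h1 : Fintype.card ({v}ᶜ : Set V) = Fintype.card V - 1 := by
        have h2 := Fintype.card_compl_set ({v} : Set V)
        simp only [Set.card_singleton] at h2
        convert h2 using 2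
      omega
    · -- double-edge-critical
      intro a b c d hab hcd hac had hbc hbd
      rw [top_adj] at hab hcd
      rw [chromaticNumber_top]
      have hsub : ((⊤ : SimpleGraph V).deleteEdges {s(a,b), s(c,d)}).chromaticNumber ≤
          ((Fintype.card V - 2 : ℕ) : ℕ∞) := by
        rw [chromaticNumber_le_iff_colorable]
        have hcardsub : Fintype.card {x : V // x ≠ b ∧ x ≠ d} = Fintype.card V - 2 := by
          rw [Fintype.card_subtype]
          have hfil : (Finset.univ.filter fun x : V => x ≠ b ∧ x ≠ d)
              = Finset.univ \ {b, d} := by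
            ext x
            simp only [Finset.mem_filter, Finset.mem_univ, true_and, Finset.mem_sdiff,
              Finset.mem_insert, Finset.mem_singleton]
            tauto
          rw [hfil, Finset.card_sdiff_of_subset (Finset.subset_univ _), Finset.card_pair hbd,
            Finset.card_univ]
        have C : ((⊤ : SimpleGraph V).deleteEdges {s(a,b), s(c,d)}).Coloring
            {x : V // x ≠ b ∧ x ≠ d} := by
          refine Coloring.mk (fun u =>
            if hb : u = b then ⟨a, hab, had⟩
            else if hd : u = d then ⟨c, Ne.symm hbc, hcd⟩
            else ⟨u, hb, hd⟩) ?_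
          intro u u' hadj
          rw [deleteEdges_adj, top_adj] at hadj
          obtain ⟨hne, hnm⟩ := hadj
          simp only [Set.mem_insert_iff, Set.mem_singleton_iff, not_or] at hnm
          obtain ⟨hm1, hm2⟩ := hnm
          intro heq
          rw [Subtype.ext_iff] at heq
          split_ifs at heq
          all_goals subst_vars
          all_goals simp_all [Sym2.eq_iff]
        exact C.colorable.mono (le_of_eq hcardsub)
      calc ((⊤ : SimpleGraph V).deleteEdges {s(a,b), s(c,d)}).chromaticNumber + 2
          ≤ ((Fintype.card V - 2 : ℕ) : ℕ∞) + 2 := add_le_add_left hsub 2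
        _ = (Fintype.card V : ℕ∞) :=
            enat_cast_add_two (show Fintype.card V - 2 + 2 = Fintype.card V by omega)
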